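/- (Splittability of II* into I₈ + I₁ + I₁) There exist matrices C, B₁, B₂ ∈ SL(2,ℤ) with C conjugate in SL(2,ℤ) to A_{I₈} = [[1,8],[0,1]] and B₁, B₂ each conjugate to A_{I₁} = [[1,1],[0,1]], such that the product C·B₁·B₂ is conjugate in SL(2,ℤ) to A_{II*} = [[0,-1],[1,1]]. In other words, the fiber type II* admits a monodromy decomposition into I₈ + I₁ + I₁. -/

import Mathlib

/-- The special linear group `SL(2, ℤ)`. -/
abbrev SL2Z := Matrix.SpecialLinearGroup (Fin 2) ℤ

/-- `A` is conjugate to `B` in `SL(2, ℤ)`: there is `P ∈ SL(2,ℤ)` with `P * A * P⁻¹ = B`. -/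
def ConjTo (A B : SL2Z) : Prop := ∃ P : SL2Z, P * A * P⁻¹ = B

/-- The standard monodromy matrix `A_{I_n} = [[1,n],[0,1]]`. -/
def AI (n : ℤ) : SL2Z := ⟨!![1, n; 0, 1], by simp [Matrix.det_fin_two_of]⟩

/-- The standard monodromy matrix `A_{II} = [[1,1],[-1,0]]`. -/
def AII : SL2Z := ⟨!![1, 1; -1, 0], by norm_num [Matrix.det_fin_two_of]⟩

/-- The standard monodromy matrix `A_{III} = [[0,1],[-1,0]]`. -/
def AIII : SL2Z := ⟨!![0, 1; -1, 0], by norm_num [Matrix.det_fin_two_of]⟩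

/-- The standard monodromy matrix `A_{IV} = [[0,1],[-1,-1]]`. -/
def AIV : SL2Z := ⟨!![0, 1; -1, -1], by norm_num [Matrix.det_fin_two_of]⟩

/-- The standard monodromy matrix `A_{I₀*} = -I`. -/
def negI : SL2Z := ⟨!![-1, 0; 0, -1], by norm_num [Matrix.det_fin_two_of]⟩

/-- The standard monodromy matrix `A_{I_n*} = -[[1,n],[0,1]]`. -/
def AIstar (n : ℤ) : SL2Z := ⟨!![-1, -n; 0, -1], by simp [Matrix.det_fin_two_of]⟩

/-- The standard monodromy matrix `A_{IV*} = [[-1,-1],[1,0]]`. -/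
def AIVstar : SL2Z := ⟨!![-1, -1; 1, 0], by norm_num [Matrix.det_fin_two_of]⟩

/-- The standard monodromy matrix `A_{III*} = [[0,-1],[1,0]]`. -/
def AIIIstar : SL2Z := ⟨!![0, -1; 1, 0], by norm_num [Matrix.det_fin_two_of]⟩

/-- The standard monodromy matrix `A_{II*} = [[0,-1],[1,1]]`. -/
def AIIstar : SL2Z := ⟨!![0, -1; 1, 1], by norm_num [Matrix.det_fin_two_of]⟩


lemma conjTo_of_swap (A B P : SL2Z) (h : P * A = B * P) : ConjTo A B :=
  ⟨P, by rw [h, mul_inv_cancel_right]⟩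

/-- The fiber type `II*` admits a monodromy decomposition into `I₈ + I₁ + I₁`. -/
theorem IIstar_decomposition_I8_I1_I1 :
    ∃ C B₁ B₂ : SL2Z, ConjTo C (AI 8) ∧ ConjTo B₁ (AI 1) ∧ ConjTo B₂ (AI 1) ∧
      ConjTo (C * B₁ * B₂) AIIstar := by
  refine ⟨⟨!![-47, 72; -32, 49], by norm_num [Matrix.det_fin_two_of]⟩,
    ⟨!![1, 1; 0, 1], by norm_num [Matrix.det_fin_two_of]⟩,
    ⟨!![-5, 4; -9, 7], by norm_num [Matrix.det_fin_two_of]⟩,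
    conjTo_of_swap _ _ ⟨!![-1, 1; 2, -3], by norm_num [Matrix.det_fin_two_of]⟩ ?_,
    conjTo_of_swap _ _ 1 ?_,
    conjTo_of_swap _ _ ⟨!![-2, 1; 3, -2], by norm_num [Matrix.det_fin_two_of]⟩ ?_,
    conjTo_of_swap _ _ ⟨!![-2, 3; -1, 1], by norm_num [Matrix.det_fin_two_of]⟩ ?_⟩ <;>
  · apply Subtype.ext
    simp only [AI, AIIstar, Matrix.SpecialLinearGroup.coe_mul, Matrix.SpecialLinearGroup.coe_one]
    ext i j
    fin_cases i <;> fin_cases j <;> decide
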